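/- (Splitting into smaller regular sets) Let X be δ-regular with constant C_R on scales α₀ to α₁, with 0 ≤ δ < 1, and assume (4C_R)^{2/(1−δ)} α₀ ≤ ρ ≤ α₁. Then there exists a collection 𝒥 of pairwise disjoint intervals such that X = ⊔_{J ∈ 𝒥} (X ∩ J), every J ∈ 𝒥 satisfies (4C_R)^{−2/(1−δ)} ρ ≤ |J| ≤ ρ, and each nonempty X ∩ J is δ-regular with constant (4C_R)^{2/(1−δ)} C_R on scales α₀ to ρ. -/

import Mathlib

open MeasureTheory Set

/-- `X` is δ-regular with constant `CR` on scales `α₀` to `α₁`. -/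
def IsDeltaRegular (X : Set ℝ) (δ CR α₀ α₁ : ℝ) : Prop :=
  ∃ μ : Measure ℝ,
    μ Xᶜ = 0 ∧
    (∀ a b : ℝ, α₀ ≤ b - a → b - a ≤ α₁ →
        μ (Set.Icc a b) ≤ ENNReal.ofReal (CR * (b - a) ^ δ)) ∧
    (∀ a b : ℝ, α₀ ≤ b - a → b - a ≤ α₁ → (a + b) / 2 ∈ X →
        ENNReal.ofReal (CR⁻¹ * (b - a) ^ δ) ≤ μ (Set.Icc a b))

open ENNReal

lemma missing_piece (X : Set ℝ) (μ : Measure ℝ) (δ CR α₀ α₁ ρ : ℝ) (L : ℕ)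
    (hδ0 : 0 ≤ δ) (hCR : 1 ≤ CR) (hρ : 0 < ρ) (hρα₁ : ρ ≤ α₁)
    (hα₀ℓ : α₀ ≤ ρ / L) (hL : 16 ≤ L)
    (h15 : 15 * CR ^ 2 ≤ (L : ℝ) ^ ((1:ℝ) - δ))
    (hub : ∀ a b : ℝ, α₀ ≤ b - a → b - a ≤ α₁ →
        μ (Set.Icc a b) ≤ ENNReal.ofReal (CR * (b - a) ^ δ))
    (hlb : ∀ a b : ℝ, α₀ ≤ b - a → b - a ≤ α₁ → (a + b) / 2 ∈ X →
        ENNReal.ofReal (CR⁻¹ * (b - a) ^ δ) ≤ μ (Set.Icc a b))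
    (m : ℤ) :
    ∃ k : ℤ, m ≤ k ∧ k < m + L ∧
      X ∩ Set.Ico ((k : ℝ) * (ρ / L)) (((k : ℝ) + 1) * (ρ / L)) = ∅ := by
  set ℓ : ℝ := ρ / L with hℓdef
  have hL0 : (0:ℝ) < L := by
    have : (0:ℕ) < L := by omega
    exact_mod_cast this
  have hCR0 : (0:ℝ) < CR := lt_of_lt_of_le one_pos hCR
  have hℓpos : 0 < ℓ := div_pos hρ hL0
  have hL1 : (1:ℝ) ≤ L := by
    have : (1:ℕ) ≤ L := by omega
    exact_mod_cast this
  have hℓρ : ℓ ≤ ρ := by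
    rw [hℓdef, div_le_iff₀ hL0]
    nlinarith
  have hLℓ : (L:ℝ) * ℓ = ρ := by
    rw [hℓdef]; field_simp
  by_contra hcon
  push_neg at hcon
  set N : ℕ := (L - 3) / 3 + 1 with hN
  have hkN : ∀ j : ℕ, j < N → 3 * j ≤ L - 3 := by omega
  -- choose points in each selected piece
  have hx : ∀ j : ℕ, ∃ x : ℝ, j < N →
      x ∈ X ∧ ((m + 1 + 3*j : ℤ) : ℝ) * ℓ ≤ x ∧ x < (((m + 1 + 3*j : ℤ) : ℝ) + 1) * ℓ := by
    intro j
    by_cases hj : j < N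
    · have h1 : m ≤ m + 1 + 3*(j:ℤ) := by omega
      have h2 : m + 1 + 3*(j:ℤ) < m + L := by
        have := hkN j hj; omega
      obtain ⟨x, hxX, hx12⟩ := hcon (m + 1 + 3*(j:ℤ)) h1 h2
      rw [Set.mem_Ico] at hx12
      exact ⟨x, fun _ => ⟨hxX, hx12.1, hx12.2⟩⟩
    · exact ⟨0, fun h => absurd h hj⟩
  choose x hx using hx
  set f : ℕ → Set ℝ := fun j => Set.Icc (x j - ℓ/2) (x j + ℓ/2) with hf
  -- disjointness
  have key : ∀ i j : ℕ, i < N → j < N → i < j → Disjoint (f i) (f j) := by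
    intro i j hi hj hij
    obtain ⟨_, _, hxi2⟩ := hx i hi
    obtain ⟨_, hxj1, _⟩ := hx j hj
    have hkij : ((m + 1 + 3*(i:ℤ) : ℤ) : ℝ) + 3 ≤ ((m + 1 + 3*(j:ℤ) : ℤ) : ℝ) := by
      push_cast
      have : (i:ℝ) + 1 ≤ j := by exact_mod_cast hij
      nlinarith
    have hlt : x i + ℓ/2 < x j - ℓ/2 := by nlinarith
    rw [hf, Set.disjoint_left]
    intro y hy hy'
    simp only [Set.mem_Icc] at hy hy'
    linarith [hy.2, hy'.1]
  have hdisj : (↑(Finset.range N) : Set ℕ).PairwiseDisjoint f := by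
    intro i hi j hj hij
    simp only [Finset.coe_range, Set.mem_Iio] at hi hj
    rcases lt_or_gt_of_ne hij with h | h
    · exact key i j hi hj h
    · exact (key j i hj hi h).symm
  have hmeas : ∀ j ∈ Finset.range N, MeasurableSet (f j) := fun j _ => measurableSet_Icc
  have hsum : μ (⋃ j ∈ Finset.range N, f j) = ∑ j ∈ Finset.range N, μ (f j) :=
    measure_biUnion_finset hdisj hmeas
  -- lower bound on each piece
  have hlow : ∀ j ∈ Finset.range N, ENNReal.ofReal (CR⁻¹ * ℓ ^ δ) ≤ μ (f j) := by
    intro j hj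
    rw [Finset.mem_range] at hj
    obtain ⟨hxX, _, _⟩ := hx j hj
    have hba : (x j + ℓ/2) - (x j - ℓ/2) = ℓ := by ring
    have hmid : ((x j - ℓ/2) + (x j + ℓ/2)) / 2 = x j := by ring
    have := hlb (x j - ℓ/2) (x j + ℓ/2) (by rw [hba]; exact hα₀ℓ)
      (by rw [hba]; linarith) (by rw [hmid]; exact hxX)
    rwa [hba] at this
  -- union inside the big interval
  have hsub : (⋃ j ∈ Finset.range N, f j) ⊆ Set.Icc ((m:ℝ) * ℓ) (((m:ℝ) + L) * ℓ) := by
    intro y hy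
    simp only [Set.mem_iUnion, Finset.mem_range] at hy
    obtain ⟨j, hj, hyj⟩ := hy
    obtain ⟨_, hxj1, hxj2⟩ := hx j hj
    simp only [hf, Set.mem_Icc] at hyj
    have h3j : 3 * (j:ℝ) ≤ (L:ℝ) - 3 := by
      have := hkN j hj
      have : (3 * j : ℕ) ≤ L - 3 := this
      have h' : ((3*j : ℕ) : ℝ) ≤ ((L - 3 : ℕ) : ℝ) := by exact_mod_cast this
      push_cast [Nat.cast_sub (by omega : 3 ≤ L)] at h'
      linarith
    have hc1 : ((m + 1 + 3*(j:ℤ) : ℤ) : ℝ) = (m:ℝ) + 1 + 3*(j:ℝ) := by push_cast; ring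
    rw [hc1] at hxj1 hxj2
    constructor
    · nlinarith [hyj.1]
    · nlinarith [hyj.2]
  -- upper bound on the big interval
  have hBA : ((m:ℝ) + L) * ℓ - (m:ℝ) * ℓ = ρ := by
    rw [← hLℓ]; ring
  have hbig : μ (Set.Icc ((m:ℝ) * ℓ) (((m:ℝ) + L) * ℓ)) ≤ ENNReal.ofReal (CR * ρ ^ δ) := by
    have := hub ((m:ℝ) * ℓ) (((m:ℝ) + L) * ℓ) (by rw [hBA]; linarith) (by rw [hBA]; exact hρα₁)
    rwa [hBA] at this
  -- the numeric contradiction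
  have hℓδpos : 0 < ℓ ^ δ := Real.rpow_pos_of_pos hℓpos δ
  have hNreal : ((L:ℝ) - 2) / 3 ≤ (N:ℝ) := by
    have h3N : L ≤ 3 * N + 2 := by omega
    have h3N' : (L:ℝ) ≤ 3 * (N:ℝ) + 2 := by exact_mod_cast h3N
    linarith
  have hLδ : (L:ℝ) ^ δ * (L:ℝ) ^ ((1:ℝ) - δ) = (L:ℝ) := by
    rw [← Real.rpow_add hL0]; norm_num
  have hL1δpos : 0 < (L:ℝ) ^ ((1:ℝ) - δ) := Real.rpow_pos_of_pos hL0 _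
  have hLδle : CR ^ 2 * (L:ℝ) ^ δ ≤ (L:ℝ) / 15 := by
    rw [le_div_iff₀ (by norm_num : (0:ℝ) < 15)]
    have hp := Real.rpow_pos_of_pos hL0 δ
    nlinarith [mul_le_mul_of_nonneg_left h15 (le_of_lt hp)]
  have hkey : CR ^ 2 * (L:ℝ) ^ δ < (N:ℝ) := by
    have hL16 : (16:ℝ) ≤ L := by exact_mod_cast hL
    have : (L:ℝ) / 15 < ((L:ℝ) - 2) / 3 := by linarith
    linarith
  have hρδ : ρ ^ δ = (L:ℝ) ^ δ * ℓ ^ δ := by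
    rw [← hLℓ, Real.mul_rpow (le_of_lt hL0) (le_of_lt hℓpos)]
  have hreal : CR * ρ ^ δ < (N:ℝ) * (CR⁻¹ * ℓ ^ δ) := by
    rw [hρδ]
    have h1 : CR * ((L:ℝ) ^ δ * ℓ ^ δ) = (CR ^ 2 * (L:ℝ) ^ δ) * (CR⁻¹ * ℓ ^ δ) := by
      field_simp
    rw [h1]
    exact mul_lt_mul_of_pos_right hkey (by positivity)
  -- assemble the contradiction
  have hchain : (N : ℝ≥0∞) * ENNReal.ofReal (CR⁻¹ * ℓ ^ δ) ≤ ENNReal.ofReal (CR * ρ ^ δ) := by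
    calc (N : ℝ≥0∞) * ENNReal.ofReal (CR⁻¹ * ℓ ^ δ)
        = (Finset.range N).card • ENNReal.ofReal (CR⁻¹ * ℓ ^ δ) := by
          rw [Finset.card_range, nsmul_eq_mul]
      _ ≤ ∑ j ∈ Finset.range N, μ (f j) := Finset.card_nsmul_le_sum _ _ _ hlow
      _ = μ (⋃ j ∈ Finset.range N, f j) := hsum.symm
      _ ≤ μ (Set.Icc ((m:ℝ) * ℓ) (((m:ℝ) + L) * ℓ)) := measure_mono hsub
      _ ≤ ENNReal.ofReal (CR * ρ ^ δ) := hbig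
  have hlt : ENNReal.ofReal (CR * ρ ^ δ) < (N : ℝ≥0∞) * ENNReal.ofReal (CR⁻¹ * ℓ ^ δ) := by
    rw [← ENNReal.ofReal_natCast N, ← ENNReal.ofReal_mul (by positivity)]
    exact (ENNReal.ofReal_lt_ofReal_iff (by positivity)).mpr hreal
  exact absurd hchain (not_le.mpr hlt)

lemma reg_singleton (Y : Set ℝ) (x : ℝ) (hx : x ∈ Y) (δ C : ℝ) (hδ : 0 ≤ δ) (hC : 1 ≤ C) :
    IsDeltaRegular (Y ∩ {x}) δ C 0 0 := by
  have hYx : Y ∩ {x} = {x} := Set.inter_eq_right.mpr (Set.singleton_subset_iff.mpr hx)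
  have hC0 : (0:ℝ) < C := by linarith
  rw [hYx]
  rcases eq_or_lt_of_le hδ with hδ0 | hδpos
  · -- δ = 0, use the Dirac measure
    subst hδ0
    refine ⟨Measure.dirac x, ?_, ?_, ?_⟩
    · rw [Measure.dirac_apply' _ (measurableSet_singleton x).compl]
      simp
    · intro a b h1 h2
      have hba : b - a = 0 := le_antisymm h2 h1
      have h1' : (1:ℝ≥0∞) ≤ ENNReal.ofReal (C * (b - a) ^ (0:ℝ)) := by
        rw [hba, Real.rpow_zero, mul_one]
        exact ENNReal.one_le_ofReal.mpr hC
      exact le_trans prob_le_one h1'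
    · intro a b h1 h2 hmem
      have hba : b - a = 0 := le_antisymm h2 h1
      rw [Set.mem_singleton_iff] at hmem
      have hxmem : x ∈ Set.Icc a b := by
        rw [Set.mem_Icc]; constructor <;> linarith
      rw [hba, Real.rpow_zero, mul_one,
        Measure.dirac_apply' _ measurableSet_Icc]
      simp only [Set.indicator_of_mem hxmem, Pi.one_apply]
      exact ENNReal.ofReal_le_one.mpr (inv_le_one_of_one_le₀ hC)
  · -- δ > 0, use the zero measure
    refine ⟨0, rfl, fun a b h1 h2 => zero_le, fun a b h1 h2 _ => ?_⟩
    have hba : b - a = 0 := le_antisymm h2 h1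
    rw [hba, Real.zero_rpow (ne_of_gt hδpos), mul_zero, ENNReal.ofReal_zero]
    exact zero_le

set_option maxHeartbeats 2000000 in
/-- Splitting into smaller regular sets. -/
theorem stmt_8 (X : Set ℝ) (δ CR α₀ α₁ ρ : ℝ)
    (hδ0 : 0 ≤ δ) (hδ1 : δ < 1) (hCR : 1 ≤ CR) (hα0 : 0 ≤ α₀)
    (hρ1 : (4 * CR) ^ (2 / (1 - δ)) * α₀ ≤ ρ) (hρ2 : ρ ≤ α₁)
    (h : IsDeltaRegular X δ CR α₀ α₁) :
    ∃ 𝒥 : Set (Set ℝ),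
      (∀ J ∈ 𝒥, ∃ a b : ℝ,
          J = Set.Icc a b ∧ (4 * CR) ^ (-(2 / (1 - δ))) * ρ ≤ b - a ∧ b - a ≤ ρ) ∧
      𝒥.PairwiseDisjoint id ∧
      (X = ⋃ J ∈ 𝒥, X ∩ J) ∧
      (∀ J ∈ 𝒥, (X ∩ J).Nonempty →
        IsDeltaRegular (X ∩ J) δ ((4 * CR) ^ (2 / (1 - δ)) * CR) α₀ ρ) := by
  obtain ⟨μ, hXc, hub, hlb⟩ := h
  have h1δ : 0 < 1 - δ := by linarith
  have hCR0 : (0:ℝ) < CR := by linarith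
  set p : ℝ := 2 / (1 - δ) with hpdef
  have hp2 : 2 ≤ p := by
    rw [hpdef, le_div_iff₀ h1δ]; nlinarith
  have h4CR : (4:ℝ) ≤ 4 * CR := by linarith
  set Lr : ℝ := (4 * CR) ^ p with hLrdef
  have hLr16 : (16:ℝ) ≤ Lr := by
    calc (16:ℝ) = (4:ℝ) ^ (2:ℝ) := by
          rw [show ((2:ℝ) = ((2:ℕ):ℝ)) by norm_num, Real.rpow_natCast]; norm_num
      _ ≤ (4:ℝ) ^ p := Real.rpow_le_rpow_of_exponent_le (by norm_num) hp2
      _ ≤ (4*CR) ^ p := Real.rpow_le_rpow (by norm_num) h4CR (by linarith)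
  have hLrpos : 0 < Lr := by linarith
  have hρ0 : 0 ≤ ρ := le_trans (mul_nonneg (le_of_lt hLrpos) hα0) hρ1
  have hLrinv : (4 * CR) ^ (-p) = Lr⁻¹ := by
    rw [Real.rpow_neg (by linarith : (0:ℝ) ≤ 4 * CR)]
  rcases eq_or_lt_of_le hρ0 with hρeq | hρpos
  · -- degenerate case ρ = 0
    have hα₀0 : α₀ = 0 := by nlinarith
    refine ⟨{J | ∃ x ∈ X, J = {x}}, ?_, ?_, ?_, ?_⟩
    · rintro J ⟨x, hxX, rfl⟩
      exact ⟨x, x, (Set.Icc_self x).symm, by rw [← hρeq]; simp, by rw [← hρeq]; simp⟩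
    · rintro J ⟨x, hxX, rfl⟩ J' ⟨y, hyX, rfl⟩ hne
      have hxy : x ≠ y := fun hh => hne (by rw [hh])
      simpa [Function.onFun] using Set.disjoint_singleton.mpr hxy
    · ext y
      simp only [Set.mem_iUnion, Set.mem_setOf_eq]
      constructor
      · intro hy
        exact ⟨{y}, ⟨y, hy, rfl⟩, hy, rfl⟩
      · rintro ⟨J, ⟨x, hxX, rfl⟩, hyX, _⟩
        exact hyX
    · rintro J ⟨x, hxX, rfl⟩ _
      rw [hα₀0, ← hρeq]
      exact reg_singleton X x hxX δ _ hδ0 (by nlinarith)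
  · -- main case ρ > 0
    set L : ℕ := ⌊Lr⌋₊ with hLdef
    have hL16 : 16 ≤ L := Nat.le_floor (by exact_mod_cast hLr16)
    have hL0 : (0:ℝ) < L := by
      have : (0:ℕ) < L := by omega
      exact_mod_cast this
    have hLle : (L:ℝ) ≤ Lr := Nat.floor_le (le_of_lt hLrpos)
    have hLge : Lr - 1 ≤ (L:ℝ) := by
      have := Nat.lt_floor_add_one Lr
      linarith
    set ℓ : ℝ := ρ / L with hℓdef
    have hℓpos : 0 < ℓ := div_pos hρpos hL0
    have hα₀ℓ : α₀ ≤ ℓ := by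
      rw [hℓdef, le_div_iff₀ hL0]
      nlinarith [mul_le_mul_of_nonneg_left hLle hα0]
    have hℓρ : ℓ ≤ ρ := by
      rw [hℓdef, div_le_iff₀ hL0]
      nlinarith [hL0, hρpos, (by exact_mod_cast Nat.one_le_iff_ne_zero.mpr (by omega) : (1:ℝ) ≤ (L:ℝ))]
    have hLℓ : (L:ℝ) * ℓ = ρ := by
      rw [hℓdef]; field_simp
    have hLr1δ : Lr ^ ((1:ℝ) - δ) = 16 * CR ^ 2 := by
      rw [hLrdef, ← Real.rpow_mul (by linarith : (0:ℝ) ≤ 4 * CR)]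
      have hpe : p * (1 - δ) = 2 := by
        rw [hpdef]; field_simp
      rw [hpe, show ((2:ℝ) = ((2:ℕ):ℝ)) by norm_num, Real.rpow_natCast]
      ring
    have h15 : 15 * CR ^ 2 ≤ (L:ℝ) ^ ((1:ℝ) - δ) := by
      have hL1516 : 15/16 * Lr ≤ (L:ℝ) := by linarith
      have hbase : (15/16 : ℝ) ≤ (15/16 : ℝ) ^ ((1:ℝ) - δ) := by
        have := Real.rpow_le_rpow_of_exponent_ge (by norm_num : (0:ℝ) < 15/16)
          (by norm_num) (by linarith : 1 - δ ≤ 1)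
        rwa [Real.rpow_one] at this
      calc 15 * CR ^ 2 = (15/16) * (16 * CR ^ 2) := by ring
        _ ≤ (15/16 : ℝ) ^ ((1:ℝ) - δ) * Lr ^ ((1:ℝ) - δ) := by
            rw [hLr1δ]
            exact mul_le_mul_of_nonneg_right hbase (by positivity)
        _ = ((15/16) * Lr) ^ ((1:ℝ) - δ) := (Real.mul_rpow (by norm_num) (le_of_lt hLrpos)).symm
        _ ≤ (L:ℝ) ^ ((1:ℝ) - δ) := Real.rpow_le_rpow (by positivity) hL1516 (by linarith)
    clear_value ℓ L Lr p
    -- the empty-piece predicate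
    set E : ℤ → Prop := fun k => X ∩ Set.Ico ((k:ℝ) * ℓ) (((k:ℝ) + 1) * ℓ) = ∅ with hEdef
    have gap : ∀ m : ℤ, ∃ k : ℤ, m ≤ k ∧ k < m + L ∧ E k := by
      intro m
      obtain ⟨k, h1, h2, h3⟩ := missing_piece X μ δ CR α₀ α₁ ρ L hδ0 hCR hρpos hρ2
        (by rw [hℓdef] at hα₀ℓ; exact hα₀ℓ) hL16 h15 hub hlb m
      exact ⟨k, h1, h2, by rw [hEdef]; rw [← hℓdef] at h3; exact h3⟩
    -- runs
    set R : ℤ → ℤ → Prop := fun s e => s ≤ e ∧ E (s - 1) ∧ E (e + 1) ∧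
      ∀ k, s ≤ k → k ≤ e → ¬ E k with hRdef
    have hrun : ∀ m : ℤ, ¬ E m → ∃ s e : ℤ, R s e ∧ s ≤ m ∧ m ≤ e := by
      intro m hm
      obtain ⟨g, ⟨hg1, hg2⟩, hgmax⟩ := Int.exists_greatest_of_bdd
        (P := fun k => k < m ∧ E k) ⟨m, fun z hz => le_of_lt hz.1⟩
        (by
          obtain ⟨k, h1, h2, h3⟩ := gap (m - L)
          exact ⟨k, by omega, h3⟩)
      obtain ⟨w, ⟨hw1, hw2⟩, hwmin⟩ := Int.exists_least_of_bdd
        (P := fun k => m < k ∧ E k) ⟨m + 1, fun z hz => by omega⟩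
        (by
          obtain ⟨k, h1, h2, h3⟩ := gap (m + 1)
          exact ⟨k, by omega, h3⟩)
      refine ⟨g + 1, w - 1, ⟨by omega, ?_, ?_, ?_⟩, by omega, by omega⟩
      · rw [show g + 1 - 1 = g by ring]; exact hg2
      · rw [show w - 1 + 1 = w by ring]; exact hw2
      · intro k hk1 hk2 hEk
        rcases lt_trichotomy k m with hlt | heq | hgt
        · have := hgmax k ⟨hlt, hEk⟩; omega
        · exact hm (heq ▸ hEk)
        · have := hwmin k ⟨hgt, hEk⟩; omega
    have hlen : ∀ s e : ℤ, R s e → e + 1 - s ≤ (L:ℤ) - 1 := by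
      intro s e hR
      obtain ⟨k, h1, h2, h3⟩ := gap s
      have hke : ¬ (k ≤ e) := fun hke => hR.2.2.2 k h1 hke h3
      omega
    have huniq : ∀ s e s' e' : ℤ, R s e → R s' e' →
        (∃ k, s ≤ k ∧ k ≤ e ∧ s' ≤ k ∧ k ≤ e') → s = s' ∧ e = e' := by
      intro s e s' e' hR hR' ⟨k, hk1, hk2, hk3, hk4⟩
      constructor
      · by_contra hne
        rcases lt_or_gt_of_ne hne with hlt | hgt
        · exact hR.2.2.2 (s' - 1) (by omega) (by omega) hR'.2.1
        · exact hR'.2.2.2 (s - 1) (by omega) (by omega) hR.2.1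
      · by_contra hne
        rcases lt_or_gt_of_ne hne with hlt | hgt
        · exact hR'.2.2.2 (e + 1) (by omega) (by omega) hR.2.2.1
        · exact hR.2.2.2 (e' + 1) (by omega) (by omega) hR'.2.2.1
    refine ⟨{J : Set ℝ | ∃ s e : ℤ, R s e ∧ J = Set.Icc ((s:ℝ) * ℓ) (((e:ℝ) + 1) * ℓ)},
      ?_, ?_, ?_, ?_⟩
    · -- size bounds
      rintro J ⟨s, e, hR, rfl⟩
      refine ⟨(s:ℝ) * ℓ, ((e:ℝ) + 1) * ℓ, rfl, ?_, ?_⟩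
      · rw [hLrinv]
        have h1 : (1:ℝ) ≤ (e:ℝ) + 1 - (s:ℝ) := by
          have := hR.1
          have : (s:ℝ) ≤ (e:ℝ) := by exact_mod_cast this
          linarith
        have h2 : Lr⁻¹ * ρ ≤ ℓ := by
          rw [hℓdef, inv_mul_eq_div, div_le_div_iff₀ hLrpos hL0]
          nlinarith
        calc Lr⁻¹ * ρ ≤ ℓ := h2
          _ = 1 * ℓ := (one_mul ℓ).symm
          _ ≤ ((e:ℝ) + 1 - (s:ℝ)) * ℓ := mul_le_mul_of_nonneg_right h1 (le_of_lt hℓpos)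
          _ = ((e:ℝ) + 1) * ℓ - (s:ℝ) * ℓ := by ring
      · have h1 : (e:ℝ) + 1 - (s:ℝ) ≤ (L:ℝ) - 1 := by exact_mod_cast hlen s e hR
        nlinarith [hℓpos, hLℓ]
    · -- pairwise disjoint
      rintro J ⟨s, e, hR, rfl⟩ J' ⟨s', e', hR', rfl⟩ hne
      by_cases hsep : e < s' ∨ e' < s
      · have hdisj : ∀ (u v u' v' : ℤ), R u v → R u' v' → v < u' →
            Disjoint (Set.Icc ((u:ℝ) * ℓ) (((v:ℝ) + 1) * ℓ))
              (Set.Icc ((u':ℝ) * ℓ) (((v':ℝ) + 1) * ℓ)) := by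
          intro u v u' v' hRu hRu' hvu
          have hne2 : v + 1 ≠ u' := by
            intro hh
            exact hRu'.2.2.2 u' le_rfl hRu'.1 (hh ▸ hRu.2.2.1)
          have h2 : v + 2 ≤ u' := by omega
          have h2' : (v:ℝ) + 2 ≤ (u':ℝ) := by exact_mod_cast h2
          rw [Set.disjoint_left]
          intro y hy hy'
          rw [Set.mem_Icc] at hy hy'
          nlinarith [hy.2, hy'.1]
        rcases hsep with hlt | hlt
        · exact hdisj s e s' e' hR hR' hlt
        · exact (hdisj s' e' s e hR' hR hlt).symm
      · exfalso
        push_neg at hsep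
        have hk : ∃ k, s ≤ k ∧ k ≤ e ∧ s' ≤ k ∧ k ≤ e' :=
          ⟨max s s', le_max_left _ _, by
            rcases max_cases s s' with ⟨hm, _⟩ | ⟨hm, _⟩ <;> omega,
            le_max_right _ _, by
            rcases max_cases s s' with ⟨hm, _⟩ | ⟨hm, _⟩ <;> omega⟩
        obtain ⟨hs, he⟩ := huniq s e s' e' hR hR' hk
        exact hne (by rw [hs, he])
    · -- covering
      ext y
      simp only [Set.mem_iUnion, Set.mem_setOf_eq]
      constructor
      · intro hy
        set m : ℤ := ⌊y / ℓ⌋ with hmdef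
        have hm1 : (m:ℝ) * ℓ ≤ y := by
          have := Int.floor_le (y / ℓ)
          calc (m:ℝ) * ℓ ≤ (y / ℓ) * ℓ := by nlinarith
            _ = y := by field_simp
        have hm2 : y < ((m:ℝ) + 1) * ℓ := by
          have := Int.lt_floor_add_one (y / ℓ)
          calc y = (y / ℓ) * ℓ := by field_simp
            _ < ((m:ℝ) + 1) * ℓ := by nlinarith
        have hEm : ¬ E m := by
          rw [hEdef]
          intro hemp
          rw [Set.eq_empty_iff_forall_notMem] at hemp
          exact hemp y ⟨hy, hm1, hm2⟩
        obtain ⟨s, e, hR, hsm, hme⟩ := hrun m hEm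
        refine ⟨Set.Icc ((s:ℝ) * ℓ) (((e:ℝ) + 1) * ℓ), ⟨s, e, hR, rfl⟩, hy, ?_⟩
        rw [Set.mem_Icc]
        have hsm' : (s:ℝ) ≤ (m:ℝ) := by exact_mod_cast hsm
        have hme' : (m:ℝ) ≤ (e:ℝ) := by exact_mod_cast hme
        constructor
        · nlinarith
        · nlinarith
      · rintro ⟨J, _, hyX, _⟩
        exact hyX
    · -- regularity of each piece
      rintro J ⟨s, e, hR, rfl⟩ _
      set Jset : Set ℝ := Set.Icc ((s:ℝ) * ℓ) (((e:ℝ) + 1) * ℓ) with hJdef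
      have hJmeas : MeasurableSet Jset := measurableSet_Icc
      refine ⟨μ.restrict Jset, ?_, ?_, ?_⟩
      · -- vanishes on the complement
        have h1 : μ.restrict Jset Xᶜ = 0 := by
          rw [Measure.restrict_apply' hJmeas]
          exact measure_mono_null Set.inter_subset_left hXc
        have h2 : μ.restrict Jset Jsetᶜ = 0 := by
          rw [Measure.restrict_apply' hJmeas, Set.compl_inter_self]
          exact measure_empty
        rw [Set.compl_inter]
        exact le_antisymm (le_trans (measure_union_le _ _) (by rw [h1, h2]; simp)) zero_le
      · -- upper bound
        intro a b h1 h2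
        rw [Measure.restrict_apply' hJmeas]
        refine le_trans (measure_mono Set.inter_subset_left)
          (le_trans (hub a b h1 (le_trans h2 hρ2)) ?_)
        apply ENNReal.ofReal_le_ofReal
        have hba0 : 0 ≤ b - a := le_trans hα0 h1
        have hba : 0 ≤ (b - a) ^ δ := Real.rpow_nonneg hba0 δ
        nlinarith [mul_nonneg (mul_nonneg (by linarith : (0:ℝ) ≤ Lr - 1) (le_of_lt hCR0)) hba]
      · -- lower bound
        intro a b h1 h2 hmid
        obtain ⟨hxX, hxJ⟩ := hmid
        set x : ℝ := (a + b) / 2 with hxdef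
        rw [hJdef, Set.mem_Icc] at hxJ
        have hab : a ≤ b := by nlinarith
        set t : ℝ := min ((b - a) / 2) ℓ with htdef
        have ht0 : 0 ≤ t := le_min (by linarith) (le_of_lt hℓpos)
        have htb : t ≤ (b - a) / 2 := min_le_left _ _
        have htℓ : t ≤ ℓ := min_le_right _ _
        have hEs' : X ∩ Set.Ico (((s:ℝ) - 1) * ℓ) ((s:ℝ) * ℓ) = ∅ := by
          have h0 : X ∩ Set.Ico (((s - 1 : ℤ):ℝ) * ℓ) ((((s - 1 : ℤ):ℝ) + 1) * ℓ) = ∅ := hR.2.1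
          have hc : ((s - 1 : ℤ):ℝ) = (s:ℝ) - 1 := by push_cast; ring
          rw [hc, show (s:ℝ) - 1 + 1 = (s:ℝ) by ring] at h0
          exact h0
        have hEe' : X ∩ Set.Ico (((e:ℝ) + 1) * ℓ) (((e:ℝ) + 2) * ℓ) = ∅ := by
          have h0 : X ∩ Set.Ico (((e + 1 : ℤ):ℝ) * ℓ) ((((e + 1 : ℤ):ℝ) + 1) * ℓ) = ∅ := hR.2.2.1
          have hc : ((e + 1 : ℤ):ℝ) = (e:ℝ) + 1 := by push_cast; ring
          rw [hc, show (e:ℝ) + 1 + 1 = (e:ℝ) + 2 by ring] at h0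
          exact h0
        have hxlt : x < ((e:ℝ) + 1) * ℓ := by
          rcases lt_or_eq_of_le hxJ.2 with hlt | heq
          · exact hlt
          · exfalso
            rw [Set.eq_empty_iff_forall_notMem] at hEe'
            refine hEe' x ⟨hxX, Set.mem_Ico.mpr ⟨le_of_eq heq.symm, ?_⟩⟩
            nlinarith [hℓpos]
        set G : Set ℝ := Set.Ico (((s:ℝ) - 1) * ℓ) ((s:ℝ) * ℓ) ∪
          Set.Ico (((e:ℝ) + 1) * ℓ) (((e:ℝ) + 2) * ℓ) with hGdef
        have hG0 : μ G = 0 := by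
          rw [hGdef]
          apply measure_union_null <;> refine measure_mono_null ?_ hXc
          · intro y hy
            rw [Set.mem_compl_iff]
            intro hyX
            rw [Set.eq_empty_iff_forall_notMem] at hEs'
            exact hEs' y ⟨hyX, hy⟩
          · intro y hy
            rw [Set.mem_compl_iff]
            intro hyX
            rw [Set.eq_empty_iff_forall_notMem] at hEe'
            exact hEe' y ⟨hyX, hy⟩
        have hsub2 : Set.Icc (x - t) (x + t) ⊆ (Set.Icc a b ∩ Jset) ∪ G := by
          intro y hy
          rw [Set.mem_Icc] at hy
          have hya : a ≤ y := by
            have : x - t ≥ a := by rw [hxdef]; linarith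
            linarith [hy.1]
          have hyb : y ≤ b := by
            have : x + t ≤ b := by rw [hxdef] at *; linarith
            linarith [hy.2]
          have hy1 : ((s:ℝ) - 1) * ℓ ≤ y := by nlinarith [hy.1, hxJ.1, htℓ]
          have hy2 : y < ((e:ℝ) + 2) * ℓ := by nlinarith [hy.2, hxlt, htℓ]
          by_cases hcase : (s:ℝ) * ℓ ≤ y ∧ y ≤ ((e:ℝ) + 1) * ℓ
          · exact Or.inl ⟨Set.mem_Icc.mpr ⟨hya, hyb⟩, Set.mem_Icc.mpr hcase⟩
          · right
            rw [hGdef]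
            rcases not_and_or.mp hcase with hc | hc
            · exact Or.inl (Set.mem_Ico.mpr ⟨hy1, lt_of_not_ge hc⟩)
            · exact Or.inr (Set.mem_Ico.mpr ⟨le_of_lt (lt_of_not_ge hc), hy2⟩)
        have hmain : ENNReal.ofReal (CR⁻¹ * (2 * t) ^ δ) ≤ μ.restrict Jset (Set.Icc a b) := by
          rw [Measure.restrict_apply' hJmeas]
          have hba2 : (x + t) - (x - t) = 2 * t := by ring
          have hαt : α₀ ≤ 2 * t := by
            have : α₀ / 2 ≤ t := le_min (by linarith) (by linarith)
            linarith
          have htα₁ : 2 * t ≤ α₁ := by linarith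
          have hmidt : ((x - t) + (x + t)) / 2 = x := by ring
          have hlow := hlb (x - t) (x + t) (by rw [hba2]; exact hαt)
            (by rw [hba2]; exact htα₁) (by rw [hmidt]; exact hxX)
          rw [hba2] at hlow
          calc ENNReal.ofReal (CR⁻¹ * (2 * t) ^ δ) ≤ μ (Set.Icc (x - t) (x + t)) := hlow
            _ ≤ μ ((Set.Icc a b ∩ Jset) ∪ G) := measure_mono hsub2
            _ ≤ μ (Set.Icc a b ∩ Jset) + μ G := measure_union_le _ _
            _ = μ (Set.Icc a b ∩ Jset) := by rw [hG0, add_zero]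
        refine le_trans ?_ hmain
        apply ENNReal.ofReal_le_ofReal
        have hba0 : 0 ≤ b - a := le_trans hα0 h1
        rcases le_or_gt ((b - a) / 2) ℓ with hc | hc
        · have ht : t = (b - a) / 2 := min_eq_left hc
          rw [ht, show 2 * ((b - a) / 2) = b - a by ring]
          have hba : 0 ≤ (b - a) ^ δ := Real.rpow_nonneg hba0 δ
          have hinv : (Lr * CR)⁻¹ ≤ CR⁻¹ := by
            apply inv_anti₀ hCR0
            nlinarith
          exact mul_le_mul_of_nonneg_right hinv hba
        · have ht : t = ℓ := min_eq_right (le_of_lt hc)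
          rw [ht]
          have h2ℓpos : (0:ℝ) < 2 * ℓ := by linarith
          have hba1 : b - a ≤ Lr * (2 * ℓ) := by
            nlinarith [hLℓ, hLle, hℓpos, hLrpos, h2]
          have hr1 : (b - a) ^ δ ≤ (Lr * (2 * ℓ)) ^ δ := Real.rpow_le_rpow hba0 hba1 hδ0
          have hr2 : (Lr * (2 * ℓ)) ^ δ = Lr ^ δ * (2 * ℓ) ^ δ :=
            Real.mul_rpow (le_of_lt hLrpos) (le_of_lt h2ℓpos)
          have hr3 : Lr ^ δ ≤ Lr := by
            have := Real.rpow_le_rpow_of_exponent_le (by linarith : (1:ℝ) ≤ Lr)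
              (by linarith : δ ≤ 1)
            rwa [Real.rpow_one] at this
          have h2ℓδ : 0 < (2 * ℓ) ^ δ := Real.rpow_pos_of_pos h2ℓpos δ
          rw [mul_inv]
          have hkey2 : (b - a) ^ δ ≤ Lr * (2 * ℓ) ^ δ := by nlinarith [hr1, hr2, hr3, h2ℓδ]
          calc Lr⁻¹ * CR⁻¹ * (b - a) ^ δ ≤ Lr⁻¹ * CR⁻¹ * (Lr * (2 * ℓ) ^ δ) := by
                apply mul_le_mul_of_nonneg_left hkey2 (by positivity)
            _ = CR⁻¹ * (2 * ℓ) ^ δ * (Lr⁻¹ * Lr) := by ring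
            _ = CR⁻¹ * (2 * ℓ) ^ δ := by rw [inv_mul_cancel₀ (ne_of_gt hLrpos), mul_one]
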